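/- Invertibility of the reduced Maxwell–Stefan matrix: for every ρ ∈ D_N, the N×N matrix ℳ(ρ) is invertible (it has full rank). -/

import Mathlib

open Finset Matrix

/-- The set `D_N = {ρ ∈ ℝ^N : 0 < ρ_i < 1 for all i, Σ ρ_i < 1}`. -/
def Dset (N : ℕ) : Set (Fin N → ℝ) :=
  {ρ | (∀ i, 0 < ρ i ∧ ρ i < 1) ∧ ∑ i, ρ i < 1}

/-- The reduced Maxwell–Stefan matrix `ℳ(ρ)`, with entries
`ℳ_{ij} = ρ_i/D_{ij} - ρ_i/D_{i(N+1)}` for `i ≠ j` and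
`ℳ_{ii} = -Σ_{k ≠ i} ρ_k/D_{ik} - (1 - Σ_l ρ_l + ρ_i)/D_{i(N+1)}`. -/
noncomputable def redM (N : ℕ) (D : Fin (N + 1) → Fin (N + 1) → ℝ) (ρ : Fin N → ℝ) :
    Matrix (Fin N) (Fin N) ℝ :=
  Matrix.of fun i j =>
    if i = j then
      -(∑ k ∈ Finset.univ.erase i, ρ k / D i.castSucc k.castSucc)
        - (1 - ∑ l, ρ l + ρ i) / D i.castSucc (Fin.last N)
    else ρ i / D i.castSucc j.castSucc - ρ i / D i.castSucc (Fin.last N)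

/-- Invertibility of the reduced Maxwell–Stefan matrix: for every `ρ ∈ D_N`, the
matrix `ℳ(ρ)` is invertible. -/
theorem stmt9 (N : ℕ) (hN : 1 ≤ N) (D : Fin (N + 1) → Fin (N + 1) → ℝ)
    (hDpos : ∀ i j, i ≠ j → 0 < D i j) (hDsymm : ∀ i j, D i j = D j i)
    (ρ : Fin N → ℝ) (hρ : ρ ∈ Dset N) :
    IsUnit (redM N D ρ) := by
  classical
  obtain ⟨hpos, hsum⟩ := hρ
  -- extended density vector
  set ρh : Fin (N + 1) → ℝ := Fin.snoc ρ (1 - ∑ l, ρ l) with hρhdef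
  have hρhpos : ∀ i, 0 < ρh i := by
    intro i
    refine Fin.lastCases ?_ ?_ i
    · simp only [ρh, Fin.snoc_last]; linarith
    · intro j; simp only [ρh, Fin.snoc_castSucc]; exact (hpos j).1
  have hρhsum : ∑ i, ρh i = 1 := by
    rw [Fin.sum_univ_castSucc]
    simp only [ρh, Fin.snoc_castSucc, Fin.snoc_last]
    ring
  rw [Matrix.isUnit_iff_isUnit_det, isUnit_iff_ne_zero]
  intro hdet
  obtain ⟨x, hx0, hxv⟩ := (Matrix.exists_mulVec_eq_zero_iff).2 hdet
  set xh : Fin (N + 1) → ℝ := Fin.snoc x (-(∑ l, x l)) with hxhdef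
  have hxhsum : ∑ i, xh i = 0 := by
    rw [Fin.sum_univ_castSucc]
    simp only [xh, Fin.snoc_castSucc, Fin.snoc_last]
    ring
  set F : Fin (N + 1) → ℝ :=
    fun i => ∑ j, (ρh i * xh j - ρh j * xh i) / D i j with hFdef
  -- Step 1: F agrees with mulVec on the first N indices
  have key1 : ∀ i : Fin N, F i.castSucc = (redM N D ρ).mulVec x i := by
    intro i
    have hx_erase : ∑ j ∈ Finset.univ.erase i, x j = (∑ j, x j) - x i :=
      Finset.sum_erase_eq_sub (Finset.mem_univ i)
    have hmv : (redM N D ρ).mulVec x i = ∑ j, redM N D ρ i j * x j := rfl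
    have hFe : F i.castSucc =
        ∑ j, (ρh i.castSucc * xh j - ρh j * xh i.castSucc) / D i.castSucc j := rfl
    rw [hmv, hFe]
    rw [Fin.sum_univ_castSucc
      (f := fun j => (ρh i.castSucc * xh j - ρh j * xh i.castSucc) / D i.castSucc j)]
    simp only [ρh, xh, Fin.snoc_castSucc, Fin.snoc_last]
    rw [← Finset.add_sum_erase _
      (fun j => (ρ i * x j - ρ j * x i) / D i.castSucc j.castSucc) (Finset.mem_univ i)]
    rw [← Finset.add_sum_erase _ (fun j => redM N D ρ i j * x j) (Finset.mem_univ i)]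
    have hdiag : redM N D ρ i i =
        -(∑ k ∈ Finset.univ.erase i, ρ k / D i.castSucc k.castSucc)
          - (1 - ∑ l, ρ l + ρ i) / D i.castSucc (Fin.last N) := by
      simp [redM]
    have hoff : ∑ j ∈ Finset.univ.erase i, redM N D ρ i j * x j =
        ∑ j ∈ Finset.univ.erase i,
          ((ρ i / D i.castSucc j.castSucc) * x j
            - (ρ i / D i.castSucc (Fin.last N)) * x j) := by
      refine Finset.sum_congr rfl ?_
      intro j hj
      have hij : i ≠ j := fun h => (Finset.ne_of_mem_erase hj) h.symm
      simp only [redM, Matrix.of_apply, if_neg hij]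
      ring
    have hlhs : ∑ j ∈ Finset.univ.erase i,
        (ρ i * x j - ρ j * x i) / D i.castSucc j.castSucc =
        ∑ j ∈ Finset.univ.erase i, ((ρ i / D i.castSucc j.castSucc) * x j)
          - (∑ j ∈ Finset.univ.erase i, ρ j / D i.castSucc j.castSucc) * x i := by
      rw [Finset.sum_mul, ← Finset.sum_sub_distrib]
      refine Finset.sum_congr rfl ?_
      intro j hj
      ring
    have htail : ∑ j ∈ Finset.univ.erase i, ρ i / D i.castSucc (Fin.last N) * x j
        = ρ i / D i.castSucc (Fin.last N) * ((∑ j, x j) - x i) := by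
      rw [← Finset.mul_sum, hx_erase]
    rw [hdiag, hoff, hlhs, Finset.sum_sub_distrib, htail]
    ring
  have hF0 : ∀ i : Fin N, F i.castSucc = 0 := by
    intro i
    rw [key1 i, hxv]
    rfl
  -- Step 2: total sum of F is zero by antisymmetry
  have hFsum : ∑ i, F i = 0 := by
    have hswap : ∑ i, F i = ∑ i, ∑ j, (ρh j * xh i - ρh i * xh j) / D j i :=
      Finset.sum_comm
    have hneg : ∑ i : Fin (N+1), ∑ j : Fin (N+1), (ρh j * xh i - ρh i * xh j) / D j i
        = -∑ i, F i := by
      rw [← Finset.sum_neg_distrib]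
      refine Finset.sum_congr rfl ?_
      intro i _
      rw [← Finset.sum_neg_distrib]
      refine Finset.sum_congr rfl ?_
      intro j _
      rw [hDsymm j i]
      ring
    have h2 : ∑ i, F i = -∑ i, F i := hswap.trans hneg
    linarith
  have hFlast : F (Fin.last N) = 0 := by
    have := hFsum
    rw [Fin.sum_univ_castSucc] at this
    rw [Finset.sum_congr rfl (fun i _ => hF0 i)] at this
    simpa using this
  have hFall : ∀ i, F i = 0 := by
    intro i
    refine Fin.lastCases hFlast hF0 i
  -- Step 3: quadratic form
  set v : Fin (N + 1) → ℝ := fun i => xh i / ρh i with hvdef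
  have hxv' : ∀ i, xh i = ρh i * v i := by
    intro i
    show xh i = ρh i * (xh i / ρh i)
    field_simp [hvdef, (hρhpos i).ne']
  set g : Fin (N + 1) → Fin (N + 1) → ℝ :=
    fun i j => v i * ((ρh i * xh j - ρh j * xh i) / D i j) with hgdef
  have hS : ∑ i, ∑ j, g i j = 0 := by
    have : ∀ i : Fin (N+1), ∑ j, g i j = v i * F i := by
      intro i
      rw [hFdef, Finset.mul_sum]
    rw [Finset.sum_congr rfl (fun i _ => this i)]
    refine Finset.sum_eq_zero ?_
    intro i _
    rw [hFall i, mul_zero]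
  -- symmetrized terms are nonpositive
  have hpair : ∀ i j, g i j + g j i = -(ρh i * ρh j * (v i - v j) ^ 2 / D i j) := by
    intro i j
    rw [hgdef]
    simp only
    rw [hDsymm j i, hxv' i, hxv' j]
    ring
  have hpair_nonpos : ∀ i j, g i j + g j i ≤ 0 := by
    intro i j
    rw [hpair]
    rcases eq_or_ne i j with h | h
    · subst h; simp
    · have hD := hDpos i j h
      have h1 : 0 ≤ ρh i * ρh j * (v i - v j) ^ 2 / D i j :=
        div_nonneg (mul_nonneg (mul_nonneg (hρhpos i).le (hρhpos j).le) (sq_nonneg _)) hD.le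
      linarith
  have hsum2 : ∑ p : Fin (N+1) × Fin (N+1), (g p.1 p.2 + g p.2 p.1) = 0 := by
    rw [Fintype.sum_prod_type]
    simp only [Finset.sum_add_distrib]
    rw [Finset.sum_comm (f := fun x y => g y x)]
    rw [hS]
    simp [hS]
  have hzero : ∀ p : Fin (N+1) × Fin (N+1), g p.1 p.2 + g p.2 p.1 = 0 := by
    intro p
    have := (Finset.sum_eq_zero_iff_of_nonpos
      (fun p _ => hpair_nonpos p.1 p.2)).1 hsum2 p (Finset.mem_univ p)
    exact this
  -- v is constant
  have hvconst : ∀ i j, v i = v j := by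
    intro i j
    rcases eq_or_ne i j with h | h
    · rw [h]
    · have h0 := hzero (i, j)
      rw [hpair] at h0
      have hD := hDpos i j h
      have h0' : ρh i * ρh j * (v i - v j) ^ 2 / D i j = 0 := neg_eq_zero.1 h0
      have hsq : ρh i * ρh j * (v i - v j) ^ 2 = 0 :=
        (div_eq_zero_iff.1 h0').resolve_right hD.ne'
      have hprod : 0 < ρh i * ρh j := mul_pos (hρhpos i) (hρhpos j)
      have hsq0 : (v i - v j) ^ 2 = 0 := (mul_eq_zero.1 hsq).resolve_left hprod.ne'
      have := sq_eq_zero_iff.1 hsq0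
      linarith [sub_eq_zero.1 this]
  -- conclude x = 0
  have hc : v (Fin.last N) = 0 := by
    have hsx : ∑ i, xh i = (∑ i, ρh i) * v (Fin.last N) := by
      rw [Finset.sum_mul]
      refine Finset.sum_congr rfl ?_
      intro i _
      rw [hxv' i, hvconst i (Fin.last N)]
    rw [hxhsum, hρhsum] at hsx
    linarith
  have hx : x = 0 := by
    funext j
    have : xh j.castSucc = 0 := by
      rw [hxv' j.castSucc, hvconst j.castSucc (Fin.last N), hc, mul_zero]
    simpa [xh, Fin.snoc_castSucc] using this
  exact hx0 hx
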